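/- arXiv:1903.05233 — 2 statements merged into one kernel-verified Lean document; each statement's English description precedes it below -/
import Mathlib

section
/- Let g₀ and g₁ be bijections of (0, π/2) onto itself with g₀(π/4) = π/4 and g₁(π/4) = 7π/16. In the Euclidean plane ℝ², the transversal line y = x meets the line y = 0 at (0,0) and the line y = 1 at (1,1); the Euclidean angle ∠((1,0), (0,0), (1,1)) equals π/4 and the Euclidean angle ∠((0,0), (1,1), (2,1)) equals 3π/4, and the relabeled interior angles on the same side of the transversal satisfy E g₀(∠((1,0),(0,0),(1,1))) + E g₁(∠((0,0),(1,1),(2,1))) = 13π/16 < π, yet the lines {(x, 0) : x ∈ ℝ} and {(x, 1) : x ∈ ℝ} are disjoint. Hence Euclid's parallel postulate fails for the relabeled angle congruence. -/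
open Real Set EuclideanGeometry

/-- The extension `E g` of a relabeling function `g` of `(0, π/2)` to `(0, π)`:
`E g x = g x` for `x < π/2`, `E g (π/2) = π/2`, and `E g x = π - g (π - x)` for `x > π/2`. -/
noncomputable def extendLabel (g : ℝ → ℝ) (x : ℝ) : ℝ :=
  if x < π / 2 then g x
  else if x = π / 2 then π / 2
  else π - g (π - x)

/-- The point `(a, b)` of the Euclidean plane. -/
noncomputable def pt (a b : ℝ) : EuclideanSpace ℝ (Fin 2) := WithLp.toLp 2 ![a, b]

lemma angle1 : ∠ (pt 1 0) (pt 0 0) (pt 1 1) = π / 4 := by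
  rw [EuclideanGeometry.angle, vsub_eq_sub, vsub_eq_sub, InnerProductGeometry.angle]
  have hi : (inner ℝ (pt 1 0 - pt 0 0) (pt 1 1 - pt 0 0) : ℝ) = 1 := by
    simp [pt, PiLp.inner_apply, Fin.sum_univ_two, PiLp.sub_apply] <;> norm_num
  have hn1 : ‖pt 1 0 - pt 0 0‖ = 1 := by
    simp [pt, EuclideanSpace.norm_eq, Fin.sum_univ_two, PiLp.sub_apply] <;> norm_num
  have hn2 : ‖pt 1 1 - pt 0 0‖ = Real.sqrt 2 := by
    simp [pt, EuclideanSpace.norm_eq, Fin.sum_univ_two, PiLp.sub_apply] <;> norm_num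
  have h2 : Real.sqrt 2 * Real.sqrt 2 = 2 := Real.mul_self_sqrt (by norm_num)
  have h2' : Real.sqrt 2 ≠ 0 := by positivity
  rw [hi, hn1, hn2, show (1:ℝ) / (1 * Real.sqrt 2) = Real.sqrt 2 / 2 by
    rw [one_mul]; field_simp; try linarith]
  rw [← Real.cos_pi_div_four, Real.arccos_cos (by positivity) (by linarith [pi_pos])]

lemma angle2 : ∠ (pt 0 0) (pt 1 1) (pt 2 1) = 3 * π / 4 := by
  rw [EuclideanGeometry.angle, vsub_eq_sub, vsub_eq_sub, InnerProductGeometry.angle]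
  have hi : (inner ℝ (pt 0 0 - pt 1 1) (pt 2 1 - pt 1 1) : ℝ) = -1 := by
    simp [pt, PiLp.inner_apply, Fin.sum_univ_two, PiLp.sub_apply] <;> norm_num
  have hn1 : ‖pt 0 0 - pt 1 1‖ = Real.sqrt 2 := by
    simp [pt, EuclideanSpace.norm_eq, Fin.sum_univ_two, PiLp.sub_apply] <;> norm_num
  have hn2 : ‖pt 2 1 - pt 1 1‖ = 1 := by
    simp [pt, EuclideanSpace.norm_eq, Fin.sum_univ_two, PiLp.sub_apply] <;> norm_num
  have h2 : Real.sqrt 2 * Real.sqrt 2 = 2 := Real.mul_self_sqrt (by norm_num)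
  have h2' : Real.sqrt 2 ≠ 0 := by positivity
  rw [hi, hn1, hn2, show (-1:ℝ) / (Real.sqrt 2 * 1) = -(Real.sqrt 2 / 2) by
    rw [mul_one]; field_simp; try linarith]
  rw [← Real.cos_pi_div_four, ← Real.cos_pi_sub, Real.arccos_cos (by nlinarith [pi_pos]) (by nlinarith [pi_pos])]
  ring

/-- With relabelings `g₀` at `(0,0)` (with `g₀ (π/4) = π/4`) and `g₁` at `(1,1)`
(with `g₁ (π/4) = 7π/16`): the transversal `y = x` meets `y = 0` at `(0,0)` and
`y = 1` at `(1,1)`; the Euclidean angles are `∠((1,0),(0,0),(1,1)) = π/4` and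
`∠((0,0),(1,1),(2,1)) = 3π/4`; the relabeled interior angles on the same side sum to
`13π/16 < π`; yet the lines `y = 0` and `y = 1` are disjoint.  Hence the parallel
postulate fails for the relabeled angle congruence. -/
theorem parallel_postulate_fails (g₀ g₁ : ℝ → ℝ)
    (hg₀ : Set.BijOn g₀ (Ioo 0 (π / 2)) (Ioo 0 (π / 2)))
    (hg₁ : Set.BijOn g₁ (Ioo 0 (π / 2)) (Ioo 0 (π / 2)))
    (hv₀ : g₀ (π / 4) = π / 4) (hv₁ : g₁ (π / 4) = 7 * π / 16) :
    pt 0 0 ∈ {p : EuclideanSpace ℝ (Fin 2) | p 1 = p 0} ∧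
    pt 0 0 ∈ {p : EuclideanSpace ℝ (Fin 2) | p 1 = 0} ∧
    pt 1 1 ∈ {p : EuclideanSpace ℝ (Fin 2) | p 1 = p 0} ∧
    pt 1 1 ∈ {p : EuclideanSpace ℝ (Fin 2) | p 1 = 1} ∧
    ∠ (pt 1 0) (pt 0 0) (pt 1 1) = π / 4 ∧
    ∠ (pt 0 0) (pt 1 1) (pt 2 1) = 3 * π / 4 ∧
    extendLabel g₀ (∠ (pt 1 0) (pt 0 0) (pt 1 1)) +
      extendLabel g₁ (∠ (pt 0 0) (pt 1 1) (pt 2 1)) = 13 * π / 16 ∧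
    13 * π / 16 < π ∧
    Disjoint {p : EuclideanSpace ℝ (Fin 2) | p 1 = 0}
      {p : EuclideanSpace ℝ (Fin 2) | p 1 = 1} := by
  have hpi := Real.pi_pos
  refine ⟨by simp [pt], by simp [pt], by simp [pt], by simp [pt], angle1, angle2, ?_, by linarith, ?_⟩
  · rw [angle1, angle2]
    have e0 : extendLabel g₀ (π / 4) = π / 4 := by
      rw [extendLabel, if_pos (by linarith)]; exact hv₀
    have e1 : extendLabel g₁ (3 * π / 4) = 9 * π / 16 := by
      rw [extendLabel, if_neg (by linarith), if_neg (by intro h; linarith)]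
      rw [show π - 3 * π / 4 = π / 4 by ring, hv₁]; ring
    rw [e0, e1]; ring
  · rw [Set.disjoint_left]
    intro p hp hp'
    simp only [Set.mem_setOf_eq] at hp hp'
    rw [hp] at hp'; norm_num at hp'
end

section
/- Let g be any bijection of (0, π/2) onto itself with g(π/4) = 7π/16, and define the labeling family f_P = E g for P = (1,1) and f_P = identity on (0, π) for all other points P ∈ ℝ². Consider the triangles A' = (0,1), B' = (0,0), C' = (1,1) and A = (1,2), B = (1,1), C = (2,2). Then dist(A', B') = dist(A, B), dist(A', C') = dist(A, C), and f_{A'}(∠ B' A' C') = f_A(∠ B A C) (both included angles equal π/2 and receive label π/2), but f_{B'}(∠ A' B' C') ≠ f_B(∠ A B C) (the angle at B' = (0,0) has measure π/4 labeled π/4, while the angle at B = (1,1) has measure π/4 labeled 7π/16). Hence the SAS congruence axiom fails for the relabeled angle congruence. -/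
open Real Set EuclideanGeometry

/-- The labeling family: `E g` at the point `(1,1)`, the identity elsewhere. -/
noncomputable def labelFam (g : ℝ → ℝ) (P : EuclideanSpace ℝ (Fin 2)) : ℝ → ℝ :=
  open scoped Classical in
  if P = pt 1 1 then extendLabel g else id

lemma pt_ne_fst {a b c d : ℝ} (h : a ≠ c) : pt a b ≠ pt c d := by
  intro he
  exact h (by simpa [pt] using congrArg (fun v : EuclideanSpace ℝ (Fin 2) => v 0) he)

lemma pt_ne_snd {a b c d : ℝ} (h : b ≠ d) : pt a b ≠ pt c d := by
  intro he
  exact h (by simpa [pt] using congrArg (fun v : EuclideanSpace ℝ (Fin 2) => v 1) he)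

lemma angle_pi_div_four : ∠ (pt 0 1) (pt 0 0) (pt 1 1) = π / 4 := by
  simp [EuclideanGeometry.angle, InnerProductGeometry.angle, pt, EuclideanSpace.norm_eq,
    PiLp.inner_apply, Fin.sum_univ_two, vsub_eq_sub]
  norm_num
  rw [show ((√2):ℝ)⁻¹ = √2/2 by
    have h2 : √2 > 0 := by positivity
    field_simp
    rw [Real.sq_sqrt (by norm_num)]]
  rw [← Real.cos_pi_div_four, Real.arccos_cos (by positivity) (by linarith [Real.pi_pos])]

lemma angle_pi_div_four' : ∠ (pt 1 2) (pt 1 1) (pt 2 2) = π / 4 := by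
  simp [EuclideanGeometry.angle, InnerProductGeometry.angle, pt, EuclideanSpace.norm_eq,
    PiLp.inner_apply, Fin.sum_univ_two, vsub_eq_sub]
  norm_num
  rw [show ((√2):ℝ)⁻¹ = √2/2 by
    have h2 : √2 > 0 := by positivity
    field_simp
    rw [Real.sq_sqrt (by norm_num)]]
  rw [← Real.cos_pi_div_four, Real.arccos_cos (by positivity) (by linarith [Real.pi_pos])]

/-- With `g` a bijection of `(0, π/2)` with `g (π/4) = 7π/16`, labeling `f_P = E g` at
`P = (1,1)` and the identity elsewhere, the triangles `A' = (0,1), B' = (0,0), C' = (1,1)`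
and `A = (1,2), B = (1,1), C = (2,2)` satisfy SAS-equality of two sides and the labeled
included angle (both included angles are `π/2` with label `π/2`), but the labeled angles
at `B'` and `B` differ (measure `π/4` labeled `π/4` vs. measure `π/4` labeled `7π/16`).
Hence SAS fails for the relabeled angle congruence. -/
theorem sas_fails (g : ℝ → ℝ)
    (hg : Set.BijOn g (Ioo 0 (π / 2)) (Ioo 0 (π / 2)))
    (hv : g (π / 4) = 7 * π / 16) :
    dist (pt 0 1) (pt 0 0) = dist (pt 1 2) (pt 1 1) ∧
    dist (pt 0 1) (pt 1 1) = dist (pt 1 2) (pt 2 2) ∧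
    ∠ (pt 0 0) (pt 0 1) (pt 1 1) = π / 2 ∧
    ∠ (pt 1 1) (pt 1 2) (pt 2 2) = π / 2 ∧
    labelFam g (pt 0 1) (∠ (pt 0 0) (pt 0 1) (pt 1 1)) = π / 2 ∧
    labelFam g (pt 1 2) (∠ (pt 1 1) (pt 1 2) (pt 2 2)) = π / 2 ∧
    labelFam g (pt 0 1) (∠ (pt 0 0) (pt 0 1) (pt 1 1)) =
      labelFam g (pt 1 2) (∠ (pt 1 1) (pt 1 2) (pt 2 2)) ∧
    ∠ (pt 0 1) (pt 0 0) (pt 1 1) = π / 4 ∧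
    labelFam g (pt 0 0) (∠ (pt 0 1) (pt 0 0) (pt 1 1)) = π / 4 ∧
    ∠ (pt 1 2) (pt 1 1) (pt 2 2) = π / 4 ∧
    labelFam g (pt 1 1) (∠ (pt 1 2) (pt 1 1) (pt 2 2)) = 7 * π / 16 ∧
    labelFam g (pt 0 0) (∠ (pt 0 1) (pt 0 0) (pt 1 1)) ≠
      labelFam g (pt 1 1) (∠ (pt 1 2) (pt 1 1) (pt 2 2)) := by
  have hpi := Real.pi_pos
  have hA' : labelFam g (pt 0 1) = id := by
    rw [labelFam, if_neg (pt_ne_fst (by norm_num))]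
  have hA : labelFam g (pt 1 2) = id := by
    rw [labelFam, if_neg (pt_ne_snd (by norm_num))]
  have hB' : labelFam g (pt 0 0) = id := by
    rw [labelFam, if_neg (pt_ne_fst (by norm_num))]
  have hB : labelFam g (pt 1 1) = extendLabel g := by
    rw [labelFam, if_pos rfl]
  have ha1 : ∠ (pt 0 0) (pt 0 1) (pt 1 1) = π / 2 := by
    simp [EuclideanGeometry.angle, InnerProductGeometry.angle, pt, EuclideanSpace.norm_eq,
      PiLp.inner_apply, Fin.sum_univ_two, vsub_eq_sub]
  have ha2 : ∠ (pt 1 1) (pt 1 2) (pt 2 2) = π / 2 := by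
    simp [EuclideanGeometry.angle, InnerProductGeometry.angle, pt, EuclideanSpace.norm_eq,
      PiLp.inner_apply, Fin.sum_univ_two, vsub_eq_sub]
  have hb : extendLabel g (π / 4) = 7 * π / 16 := by
    rw [extendLabel, if_pos (by linarith)]
    exact hv
  refine ⟨?_, ?_, ha1, ha2, ?_, ?_, ?_, angle_pi_div_four, ?_, angle_pi_div_four', ?_, ?_⟩
  · simp [pt, EuclideanSpace.dist_eq, Fin.sum_univ_two, Real.dist_eq]; norm_num
  · simp [pt, EuclideanSpace.dist_eq, Fin.sum_univ_two, Real.dist_eq]; norm_num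
  · rw [hA', ha1]; rfl
  · rw [hA, ha2]; rfl
  · rw [hA', hA, ha1, ha2]
  · rw [hB', angle_pi_div_four]; rfl
  · rw [hB, angle_pi_div_four', hb]
  · rw [hB', hB, angle_pi_div_four, angle_pi_div_four', hb]
    intro h
    simp only [id] at h
    linarith
end
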